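/- Let q be odd, s = (q-1)/2, a_0, a_1 ∈ F_q^*, r_0, r_1 positive integers. Then f(x) = (1/2) a_0 x^{r_0}(1 + x^s) + (1/2) a_1 x^{r_1}(1 - x^s) is a permutation polynomial of F_q if and only if gcd(r_0 r_1, s) = 1 and (a_0 a_1)^s = (-1)^{r_1 + 1}. -/

import Mathlib

open Finset Polynomial

theorem two_piece_pp_criterion
    (F : Type*) [Field F] [Fintype F] (q s : ℕ)
    (hq : Fintype.card F = q) (hqodd : Odd q)
    (hs : q - 1 = 2 * s)
    (a0 a1 : F) (ha0 : a0 ≠ 0) (ha1 : a1 ≠ 0)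
    (r0 r1 : ℕ) (hr0 : 0 < r0) (hr1 : 0 < r1)
    (f : F → F)
    (hf : ∀ x : F, f x = (2 : F)⁻¹ * a0 * x ^ r0 * (1 + x ^ s)
                        + (2 : F)⁻¹ * a1 * x ^ r1 * (1 - x ^ s)) :
    Function.Bijective f ↔
      Nat.gcd (r0 * r1) s = 1 ∧ (a0 * a1) ^ s = (-1 : F) ^ (r1 + 1) := by
  classical
  have hq2 : 2 ≤ q := hq ▸ Fintype.one_lt_card
  have hchar : ringChar F ≠ 2 := by
    intro h
    have h2 := FiniteField.even_card_of_char_two h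
    rw [hq] at h2
    obtain ⟨k, hk⟩ := hqodd
    omega
  have h2 : (2 : F) ≠ 0 := Ring.two_ne_zero hchar
  have hs1 : 1 ≤ s := by
    obtain ⟨k, hk⟩ := hqodd
    omega
  have hne11 : (-1 : F) ≠ 1 := by
    intro h; apply h2; linear_combination -h
  have hpow2s : ∀ x : F, x ≠ 0 → x ^ (2 * s) = 1 := by
    intro x hx
    have h := FiniteField.pow_card_sub_one_eq_one x hx
    rwa [hq, hs] at h
  have hdich : ∀ x : F, x ≠ 0 → x ^ s = 1 ∨ x ^ s = -1 := by
    intro x hx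
    have h := FiniteField.pow_dichotomy hchar hx
    have hdiv : Fintype.card F / 2 = s := by rw [hq]; omega
    rwa [hdiv] at h
  have f0 : f 0 = 0 := by
    rw [hf]; simp [zero_pow hr0.ne', zero_pow hr1.ne']
  have h21 : (2 : F)⁻¹ * 2 = 1 := inv_mul_cancel₀ h2
  have fQ : ∀ x : F, x ^ s = 1 → f x = a0 * x ^ r0 := by
    intro x h; rw [hf x, h]; linear_combination (a0 * x ^ r0) * h21
  have fN : ∀ x : F, x ^ s = -1 → f x = a1 * x ^ r1 := by
    intro x h; rw [hf x, h]; linear_combination (a1 * x ^ r1) * h21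
  have fne : ∀ x : F, x ≠ 0 → f x ≠ 0 := by
    intro x hx
    rcases hdich x hx with h | h
    · rw [fQ x h]; exact mul_ne_zero ha0 (pow_ne_zero _ hx)
    · rw [fN x h]; exact mul_ne_zero ha1 (pow_ne_zero _ hx)
  constructor
  · rintro ⟨hinj, -⟩
    obtain ⟨g, hg⟩ := IsCyclic.exists_generator (α := Fˣ)
    have hog : orderOf g = 2 * s := by
      rw [orderOf_eq_card_of_forall_mem_zpowers hg, Nat.card_eq_fintype_card,
        Fintype.card_units, hq, hs]
    -- construction of nontrivial elements when gcd(r,s) ≠ 1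
    have hu : ∀ r : ℕ, Nat.gcd r s ≠ 1 → ∃ u : Fˣ, u ≠ 1 ∧ u ^ s = 1 ∧ u ^ r = 1 := by
      intro r hd1
      set d := Nat.gcd r s with hdd
      have hds : d ∣ s := Nat.gcd_dvd_right r s
      have hdr : d ∣ r := Nat.gcd_dvd_left r s
      have hd0 : 0 < d := Nat.gcd_pos_of_pos_right r hs1
      have hd2 : 2 ≤ d := by omega
      have hdles : d ≤ s := Nat.le_of_dvd hs1 hds
      have hsd1 : 1 ≤ s / d := Nat.div_pos hdles hd0
      have hsdlt : s / d < s := Nat.div_lt_self (by omega) hd2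
      refine ⟨g ^ (2 * (s / d)), ?_, ?_, ?_⟩
      · intro h
        have hdvd : orderOf g ∣ 2 * (s / d) := orderOf_dvd_of_pow_eq_one h
        rw [hog] at hdvd
        have := Nat.le_of_dvd (by omega) hdvd
        omega
      · rw [← pow_mul]
        apply orderOf_dvd_iff_pow_eq_one.mp
        rw [hog]
        exact ⟨s / d, by ring⟩
      · rw [← pow_mul]
        apply orderOf_dvd_iff_pow_eq_one.mp
        rw [hog]
        obtain ⟨s', hs'⟩ := hds
        obtain ⟨r', hr'⟩ := hdr
        refine ⟨r', ?_⟩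
        have hsd : s / d = s' := by rw [hs', Nat.mul_div_cancel_left _ hd0]
        rw [hsd, hr', hs']; ring
    have hgcd0 : Nat.gcd r0 s = 1 := by
      by_contra hd
      obtain ⟨u, hu1, hus, hur⟩ := hu r0 hd
      have hx : ((u : F)) ^ s = 1 := by
        rw [← Units.val_pow_eq_pow_val, hus, Units.val_one]
      have hxr : ((u : F)) ^ r0 = 1 := by
        rw [← Units.val_pow_eq_pow_val, hur, Units.val_one]
      have e1 : f (u : F) = a0 := by rw [fQ _ hx, hxr, mul_one]
      have e2 : f 1 = a0 := by rw [fQ 1 (one_pow s), one_pow, mul_one]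
      have := hinj (e1.trans e2.symm)
      exact hu1 (Units.ext (by simpa using this))
    have hgs : ((g : F)) ^ s = -1 := by
      rcases hdich (g : F) (Units.ne_zero g) with h | h
      · exfalso
        have hgu : (g : Fˣ) ^ s = 1 := Units.ext (by simpa using h)
        have hdvd : orderOf g ∣ s := orderOf_dvd_of_pow_eq_one hgu
        rw [hog] at hdvd
        have := Nat.le_of_dvd (by omega) hdvd
        omega
      · exact h
    have hgcd1 : Nat.gcd r1 s = 1 := by
      by_contra hd
      obtain ⟨u, hu1, hus, hur⟩ := hu r1 hd
      have husF : ((u : F)) ^ s = 1 := by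
        rw [← Units.val_pow_eq_pow_val, hus, Units.val_one]
      have hurF : ((u : F)) ^ r1 = 1 := by
        rw [← Units.val_pow_eq_pow_val, hur, Units.val_one]
      have hy : (((g * u : Fˣ)) : F) ^ s = -1 := by
        push_cast
        rw [mul_pow, hgs, husF, mul_one]
      have hyr : (((g * u : Fˣ)) : F) ^ r1 = ((g : F)) ^ r1 := by
        push_cast
        rw [mul_pow, hurF, mul_one]
      have e1 : f (((g * u : Fˣ)) : F) = f (g : F) := by
        rw [fN _ hy, fN _ hgs, hyr]
      have e2 := hinj e1
      have : (g * u : Fˣ) = g := Units.ext (by simpa using e2)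
      apply hu1
      have h' : g * u = g * 1 := by rw [mul_one]; exact this
      exact mul_left_cancel h'
    have hchi : (a0 * a1) ^ s = (-1 : F) ^ (r1 + 1) := by
      by_contra hcon
      have hA := hdich (a0 * a1) (mul_ne_zero ha0 ha1)
      have hB : (-1 : F) ^ (r1 + 1) = 1 ∨ (-1 : F) ^ (r1 + 1) = -1 := by
        rcases Nat.even_or_odd (r1 + 1) with h | h
        · left; exact h.neg_one_pow
        · right; exact h.neg_one_pow
      have hprod : a0 ^ s * a1 ^ s = (-1 : F) ^ r1 := by
        have hAB : (a0 * a1) ^ s = -(-1 : F) ^ (r1 + 1) := by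
          rcases hA with h | h <;> rcases hB with h' | h' <;>
            rw [h, h'] at hcon ⊢ <;> first
              | exact absurd rfl hcon
              | rw [neg_neg]
        rw [mul_pow] at hAB
        rw [hAB, pow_succ]
        ring
      have ha02 : a0 ^ s * a0 ^ s = 1 := by
        rw [← pow_add]
        have : s + s = 2 * s := by ring
        rw [this]; exact hpow2s a0 ha0
      have ha12 : a1 ^ s * a1 ^ s = 1 := by
        rw [← pow_add]
        have : s + s = 2 * s := by ring
        rw [this]; exact hpow2s a1 ha1
      -- every nonzero element maps into {z : z^s = a0^s}
      have hε : ∀ x : F, x ≠ 0 → (f x) ^ s = a0 ^ s := by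
        intro x hx
        rcases hdich x hx with h | h
        · rw [fQ x h, mul_pow, ← pow_mul, mul_comm r0 s, pow_mul, h, one_pow, mul_one]
        · rw [fN x h, mul_pow, ← pow_mul, mul_comm r1 s, pow_mul, h]
          linear_combination a0 ^ s * ha12 - a1 ^ s * hprod
      have hT : (Finset.univ.filter fun z : F => z ^ s = a0 ^ s).card ≤ s := by
        have hsub : (Finset.univ.filter fun z : F => z ^ s = a0 ^ s) ⊆
            (X ^ s - C (a0 ^ s) : F[X]).roots.toFinset := by
          intro z hz
          rw [Finset.mem_filter] at hz
          rw [Multiset.mem_toFinset,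
            mem_roots (X_pow_sub_C_ne_zero (by omega) (a0 ^ s))]
          simp [IsRoot, hz.2]
        calc (Finset.univ.filter fun z : F => z ^ s = a0 ^ s).card
            ≤ (X ^ s - C (a0 ^ s) : F[X]).roots.toFinset.card := Finset.card_le_card hsub
          _ ≤ Multiset.card (X ^ s - C (a0 ^ s) : F[X]).roots :=
              Multiset.toFinset_card_le _
          _ ≤ (X ^ s - C (a0 ^ s) : F[X]).natDegree := card_roots' _
          _ = s := natDegree_X_pow_sub_C
      have hS : (Finset.univ.erase (0 : F)).card = 2 * s := by
        rw [Finset.card_erase_of_mem (Finset.mem_univ 0), Finset.card_univ, hq]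
        omega
      have hle := Finset.card_le_card_of_injOn
        (s := Finset.univ.erase (0 : F))
        (t := Finset.univ.filter fun z : F => z ^ s = a0 ^ s) f
        (fun x hx => by
          exact Finset.mem_filter.mpr ⟨Finset.mem_univ _, hε x (Finset.mem_erase.mp hx).1⟩)
        (hinj.injOn)
      rw [hS] at hle
      omega
    exact ⟨Nat.Coprime.mul hgcd0 hgcd1, hchi⟩
  · rintro ⟨hgcd, hchi⟩
    have hcop0 : Nat.gcd r0 s = 1 :=
      Nat.Coprime.coprime_dvd_left (dvd_mul_right r0 r1) hgcd
    have hcop1 : Nat.gcd r1 s = 1 :=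
      Nat.Coprime.coprime_dvd_left (dvd_mul_left r1 r0) hgcd
    rw [← Finite.injective_iff_bijective]
    intro x y hxy
    rcases eq_or_ne x 0 with rfl | hx
    · rcases eq_or_ne y 0 with rfl | hy
      · rfl
      · rw [f0] at hxy; exact absurd hxy.symm (fne y hy)
    rcases eq_or_ne y 0 with rfl | hy
    · rw [f0] at hxy; exact absurd hxy (fne x hx)
    have hzkey : ∀ z : F, z ^ s = 1 → ∀ r : ℕ, Nat.gcd r s = 1 → z ^ r = 1 → z = 1 := by
      intro z h1 r hcop hr
      have o1 : orderOf z ∣ r := orderOf_dvd_of_pow_eq_one hr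
      have o2 : orderOf z ∣ s := orderOf_dvd_of_pow_eq_one h1
      have : orderOf z ∣ 1 := hcop ▸ Nat.dvd_gcd o1 o2
      exact orderOf_eq_one_iff.mp (Nat.dvd_one.mp this)
    have hQcase : ∀ u v : F, u ≠ 0 → v ≠ 0 → u ^ s = v ^ s →
        ∀ r : ℕ, Nat.gcd r s = 1 → u ^ r = v ^ r → u = v := by
      intro u v hu hv hsuv r hcop hr
      have hvs : v ^ s ≠ 0 := pow_ne_zero _ hv
      have hz1 : (u * v⁻¹) ^ s = 1 := by
        rw [mul_pow, inv_pow, hsuv, mul_inv_cancel₀ hvs]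
      have hzr : (u * v⁻¹) ^ r = 1 := by
        rw [mul_pow, inv_pow, hr, mul_inv_cancel₀ (pow_ne_zero _ hv)]
      have := hzkey _ hz1 r hcop hzr
      exact (mul_inv_eq_one₀ hv).mp this
    -- mixed-case contradiction
    have hmix : ∀ u v : F, u ^ s = 1 → v ^ s = -1 → a0 * u ^ r0 = a1 * v ^ r1 → False := by
      intro u v hxs hys hxy'
      have E1 : a0 ^ s = a1 ^ s * (-1 : F) ^ r1 := by
        have h := congrArg (fun t => t ^ s) hxy'
        rw [mul_pow, mul_pow, ← pow_mul, ← pow_mul, mul_comm r0 s, mul_comm r1 s,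
          pow_mul, pow_mul, hxs, hys, one_pow, mul_one] at h
        exact h
      have E2 : a0 ^ s * a1 ^ s = -(-1 : F) ^ r1 := by
        rw [← mul_pow, hchi, pow_succ]; ring
      have E3 : a1 ^ s * a1 ^ s = 1 := by
        rw [← pow_add]
        have : s + s = 2 * s := by ring
        rw [this]
        have h := FiniteField.pow_card_sub_one_eq_one a1 ha1
        rwa [hq, hs] at h
      have hc0 : (2 : F) * (-1 : F) ^ r1 = 0 := by
        linear_combination (-(a1 ^ s)) * E1 + E2 - ((-1 : F) ^ r1) * E3
      have : (-1 : F) ^ r1 ≠ 0 := pow_ne_zero _ (neg_ne_zero.mpr one_ne_zero)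
      exact this (by
        rcases mul_eq_zero.mp hc0 with h | h
        · exact absurd h h2
        · exact h)
    rcases hdich x hx with hxs | hxs <;> rcases hdich y hy with hys | hys
    · rw [fQ x hxs, fQ y hys] at hxy
      exact hQcase x y hx hy (by rw [hxs, hys]) r0 hcop0 (mul_left_cancel₀ ha0 hxy)
    · rw [fQ x hxs, fN y hys] at hxy
      exact (hmix x y hxs hys hxy).elim
    · rw [fN x hxs, fQ y hys] at hxy
      exact (hmix y x hys hxs hxy.symm).elim
    · rw [fN x hxs, fN y hys] at hxy
      exact hQcase x y hx hy (by rw [hxs, hys]) r1 hcop1 (mul_left_cancel₀ ha1 hxy)
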